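/- arXiv:2306.17572 — 4 statements merged into one kernel-verified Lean document; each statement's English description precedes it below -/
import Mathlib

section
/- Let μ : ℕ → ℝ be a sequence of positive reals, let λ ≥ 0 and α be real numbers, and suppose there is a constant c with μ_j + λ ≥ c > α² for all j. Let s be a positive real number such that ∑_j (μ_j + λ)^{-s/2} < ∞. Then all of the following series converge, the double series converges absolutely, and ∑_j ( √(μ_j+λ) − α²/√(μ_j+λ) )^{-s} = ∑_{k=0}^∞ ( Γ(s+k) · α^{2k} / (k! · Γ(s)) ) · ∑_j (μ_j + λ)^{-s/2 - k}. -/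
open Real Filter Topology

noncomputable def Cb (s : ℝ) (k : ℕ) : ℝ := Real.Gamma (s + k) / (k.factorial * Real.Gamma s)

lemma Cb_pos {s : ℝ} (hs : 0 < s) (k : ℕ) : 0 < Cb s k :=
  div_pos (Real.Gamma_pos_of_pos (by positivity))
    (mul_pos (by exact_mod_cast Nat.cast_pos.mpr k.factorial_pos) (Real.Gamma_pos_of_pos hs))

lemma Cb_zero {s : ℝ} (hs : 0 < s) : Cb s 0 = 1 := by
  simp [Cb, div_self (ne_of_gt (Real.Gamma_pos_of_pos hs))]

lemma Cb_succ {s : ℝ} (hs : 0 < s) (k : ℕ) :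
    ((k : ℝ) + 1) * Cb s (k + 1) = (s + k) * Cb s k := by
  have h1 : Real.Gamma (s + (k + 1 : ℕ)) = (s + k) * Real.Gamma (s + k) := by
    have : s + ((k : ℝ) + 1) = (s + k) + 1 := by ring
    rw [Nat.cast_add, Nat.cast_one, this, Real.Gamma_add_one (by positivity)]
  have h2 : ((k + 1 : ℕ).factorial : ℝ) = ((k : ℝ) + 1) * (k.factorial : ℝ) := by
    rw [Nat.factorial_succ]; push_cast; ring
  have hΓ : Real.Gamma s ≠ 0 := ne_of_gt (Real.Gamma_pos_of_pos hs)
  have hfac : (k.factorial : ℝ) ≠ 0 := by positivity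
  have hk1 : ((k : ℝ) + 1) ≠ 0 := by positivity
  rw [Cb, Cb, h1, h2]
  field_simp

lemma tend1 (a : ℝ) : Tendsto (fun n : ℕ => (a + n) / ((n : ℝ) + 1)) atTop (𝓝 1) := by
  have h : (fun n : ℕ => (a + n) / ((n : ℝ) + 1))
      = fun n : ℕ => (a - 1) * (1 / ((n : ℝ) + 1)) + 1 := by
    funext n
    have : ((n : ℝ) + 1) ≠ 0 := by positivity
    field_simp
    ring
  rw [h]
  simpa using (tendsto_one_div_add_atTop_nhds_zero_nat.const_mul (a - 1)).add
    (tendsto_const_nhds (x := (1 : ℝ)))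

lemma summable_ratio {f : ℕ → ℝ} {l : ℝ} (hl : l < 1) (hpos : ∀ n, 0 < f n)
    (h : Tendsto (fun n => f (n + 1) / f n) atTop (𝓝 l)) : Summable f := by
  apply summable_of_ratio_test_tendsto_lt_one hl (Eventually.of_forall fun n => (hpos n).ne')
  refine h.congr fun n => ?_
  rw [Real.norm_eq_abs, Real.norm_eq_abs, abs_of_pos (hpos (n + 1)), abs_of_pos (hpos n)]

lemma sumCb {s : ℝ} (hs : 0 < s) {r : ℝ} (h0 : 0 < r) (h1 : r < 1) :
    Summable (fun k : ℕ => Cb s k * r ^ k) := by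
  refine summable_ratio h1 (fun n => mul_pos (Cb_pos hs n) (pow_pos h0 n)) ?_
  have key : ∀ n : ℕ, (Cb s (n + 1) * r ^ (n + 1)) / (Cb s n * r ^ n)
      = (s + n) / ((n : ℝ) + 1) * r := by
    intro n
    have hC : Cb s (n + 1) = (s + n) * Cb s n / ((n : ℝ) + 1) :=
      (eq_div_iff (by positivity)).2 (by linarith [Cb_succ hs n, mul_comm ((n:ℝ)+1) (Cb s (n+1))])
    have hCn := (Cb_pos hs n).ne'
    have hrn : r ^ n ≠ 0 := (pow_pos h0 n).ne'
    rw [hC, pow_succ]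
    field_simp
  have := (tend1 s).mul_const r
  rw [one_mul] at this
  exact this.congr fun n => (key n).symm

lemma sumCb' {s : ℝ} (hs : 0 < s) {b : ℝ} (h0 : 0 < b) (h1 : b < 1) :
    Summable (fun k : ℕ => ((k : ℝ) + 1) * Cb s k * b ^ k / b) := by
  refine summable_ratio h1
    (fun n => by have := Cb_pos hs n; positivity) ?_
  have key : ∀ n : ℕ, (((n : ℝ) + 1 + 1) * Cb s (n + 1) * b ^ (n + 1) / b)
      / (((n : ℝ) + 1) * Cb s n * b ^ n / b)
      = ((2 : ℝ) + n) / ((n : ℝ) + 1) * ((s + n) / ((n : ℝ) + 1) * b) := by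
    intro n
    have hC : Cb s (n + 1) = (s + n) * Cb s n / ((n : ℝ) + 1) :=
      (eq_div_iff (by positivity)).2 (by linarith [Cb_succ hs n, mul_comm ((n:ℝ)+1) (Cb s (n+1))])
    have hCn := (Cb_pos hs n).ne'
    have hbn : b ^ n ≠ 0 := (pow_pos h0 n).ne'
    rw [hC, pow_succ]
    field_simp
    ring
  have := ((tend1 2).mul ((tend1 s).mul_const b))
  rw [one_mul, one_mul] at this
  refine this.congr fun n => ?_
  rw [← key n]
  push_cast
  ring_nf

noncomputable def fS (s y : ℝ) : ℝ := ∑' k : ℕ, Cb s k * y ^ k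
noncomputable def DS (s y : ℝ) : ℝ := ∑' k : ℕ, Cb s k * ((k : ℝ) * y ^ (k - 1))

set_option maxHeartbeats 2000000 in
lemma binomial_hasSum {s : ℝ} (hs : 0 < s) {x : ℝ} (hx0 : 0 ≤ x) (hx1 : x < 1) :
    HasSum (fun k : ℕ => Cb s k * x ^ k) ((1 - x) ^ (-s)) := by
  set b : ℝ := (x + 1) / 2 with hbdef
  have hb0 : 0 < b := by rw [hbdef]; linarith
  have hxb : x < b := by rw [hbdef]; linarith
  have hb1 : b < 1 := by rw [hbdef]; linarith
  have hu : Summable (fun k : ℕ => ((k : ℝ) + 1) * Cb s k * b ^ k / b) := sumCb' hs hb0 hb1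
  have hg : ∀ (n : ℕ) (y : ℝ), y ∈ Set.Ioo (-b) b →
      HasDerivAt (fun z : ℝ => Cb s n * z ^ n) (Cb s n * ((n : ℝ) * y ^ (n - 1))) y :=
    fun n y _ => (hasDerivAt_pow n y).const_mul (Cb s n)
  have hg' : ∀ (n : ℕ) (y : ℝ), y ∈ Set.Ioo (-b) b →
      ‖Cb s n * ((n : ℝ) * y ^ (n - 1))‖ ≤ ((n : ℝ) + 1) * Cb s n * b ^ n / b := by
    intro n y hy
    have hyb : |y| ≤ b := abs_le.mpr ⟨hy.1.le, hy.2.le⟩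
    have hCb := Cb_pos hs n
    rw [Real.norm_eq_abs, abs_mul, abs_of_pos hCb, abs_mul, abs_pow, Nat.abs_cast]
    rcases n with _ | m
    · simp
      positivity
    · have h1 : |y| ^ m ≤ b ^ m := pow_le_pow_left₀ (abs_nonneg y) hyb m
      have h2 : ((m : ℝ) + 1 + 1) * Cb s (m + 1) * b ^ (m + 1) / b
          = ((m : ℝ) + 1 + 1) * Cb s (m + 1) * b ^ m := by
        rw [pow_succ, mul_div_assoc, mul_div_assoc, div_self hb0.ne', mul_one]
      push_cast
      rw [h2]
      have h3 : (0:ℝ) ≤ (m : ℝ) + 1 := by positivity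
      calc Cb s (m + 1) * (((m : ℝ) + 1) * |y| ^ m)
          ≤ Cb s (m + 1) * (((m : ℝ) + 1 + 1) * b ^ m) := by
            apply mul_le_mul_of_nonneg_left _ hCb.le
            apply mul_le_mul (by linarith) h1 (by positivity) (by linarith)
        _ = ((m : ℝ) + 1 + 1) * Cb s (m + 1) * b ^ m := by ring
  have hy₀ : b / 2 ∈ Set.Ioo (-b) b := ⟨by linarith, by linarith⟩
  have hg0 : Summable fun n : ℕ => Cb s n * (b / 2) ^ n :=
    sumCb hs (by linarith) (by linarith)
  have hsub : Set.Icc 0 x ⊆ Set.Ioo (-b) b := fun y hy =>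
    ⟨lt_of_lt_of_le (by linarith) hy.1, lt_of_le_of_lt hy.2 hxb⟩
  have hasDeriv : ∀ y ∈ Set.Ioo (-b) b, HasDerivAt (fS s) (DS s y) y := fun y hy =>
    hasDerivAt_tsum_of_isPreconnected (g := fun (n : ℕ) (z : ℝ) => Cb s n * z ^ n)
      (g' := fun (n : ℕ) (y : ℝ) => Cb s n * ((n : ℝ) * y ^ (n - 1)))
      hu isOpen_Ioo (convex_Ioo _ _).isPreconnected hg hg' hy₀ hg0 hy
  have S1 : ∀ y ∈ Set.Icc (0:ℝ) x, Summable fun n : ℕ => Cb s n * y ^ n := fun y hy =>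
    summable_of_summable_hasDerivAt_of_isPreconnected (g := fun (n : ℕ) (z : ℝ) => Cb s n * z ^ n)
      (g' := fun (n : ℕ) (y : ℝ) => Cb s n * ((n : ℝ) * y ^ (n - 1)))
      hu isOpen_Ioo (convex_Ioo _ _).isPreconnected hg hg' hy₀ hg0 (hsub hy)
  have S2 : ∀ y ∈ Set.Icc (0:ℝ) x,
      Summable fun n : ℕ => Cb s n * ((n : ℝ) * y ^ (n - 1)) := by
    intro y hy
    refine hu.of_nonneg_of_le (fun n => ?_) (fun n => ?_)
    · have := Cb_pos hs n
      have hy0 : 0 ≤ y := hy.1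
      positivity
    · exact le_trans (le_abs_self _) (hg' n y (hsub hy))
  have hODE : ∀ y ∈ Set.Icc (0:ℝ) x, (1 - y) * DS s y = s * fS s y := by
    intro y hy
    have T1 := S1 y hy
    have T2' := S2 y hy
    have T2 : Summable fun k : ℕ => (k : ℝ) * Cb s k * y ^ k := by
      refine (T2'.mul_right y).congr fun k => ?_
      cases k with
      | zero => simp
      | succ m => push_cast [Nat.succ_sub_one]; rw [pow_succ]; ring
    have hshift : DS s y = ∑' k : ℕ, (s + k) * Cb s k * y ^ k := by
      rw [DS, Summable.tsum_eq_zero_add T2']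
      simp only [Nat.cast_zero, zero_mul, mul_zero, zero_add]
      exact tsum_congr fun k => by
        push_cast [Nat.succ_sub_one]
        linear_combination y ^ k * Cb_succ hs k
    have hsplit : ∑' k : ℕ, (s + k) * Cb s k * y ^ k = s * fS s y + y * DS s y := by
      have e1 : ∀ k : ℕ, (s + k) * Cb s k * y ^ k
          = s * (Cb s k * y ^ k) + (k : ℝ) * Cb s k * y ^ k := fun k => by ring
      rw [tsum_congr e1, Summable.tsum_add (T1.mul_left s) T2, tsum_mul_left]
      rw [fS, DS]
      congr 1
      rw [← tsum_mul_left]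
      exact tsum_congr fun k => by
        cases k with
        | zero => simp
        | succ m => push_cast [Nat.succ_sub_one]; rw [pow_succ]; ring
    have h := hshift.trans hsplit
    linarith [h]
  have hgderiv : ∀ y ∈ Set.Icc (0:ℝ) x,
      HasDerivAt (fun z => fS s z * (1 - z) ^ s) 0 y := by
    intro y hy
    have hy1 : (1 : ℝ) - y ≠ 0 := ne_of_gt (by linarith [hy.2])
    have h1 : HasDerivAt (fun z : ℝ => 1 - z) (-1) y := (hasDerivAt_id y).const_sub 1
    have h2 := h1.rpow_const (p := s) (Or.inl hy1)
    have h3 := (hasDeriv y (hsub hy)).mul h2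
    have hpow : (1 - y) ^ s = (1 - y) ^ (s - 1) * (1 - y) := by
      rw [← Real.rpow_add_one hy1 (s - 1), sub_add_cancel]
    have hval : DS s y * (1 - y) ^ s + fS s y * (-1 * s * (1 - y) ^ (s - 1)) = 0 := by
      rw [hpow]
      linear_combination (1 - y) ^ (s - 1) * hODE y hy
    exact hval ▸ h3
  have hcont : ContinuousOn (fun z => fS s z * (1 - z) ^ s) (Set.Icc 0 x) :=
    fun y hy => (hgderiv y hy).continuousAt.continuousWithinAt
  have hder : ∀ y ∈ Set.Ico (0:ℝ) x,
      HasDerivWithinAt (fun z => fS s z * (1 - z) ^ s) 0 (Set.Ici y) y :=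
    fun y hy => (hgderiv y (Set.Ico_subset_Icc_self hy)).hasDerivWithinAt
  have hconst := constant_of_has_deriv_right_zero hcont hder x (Set.right_mem_Icc.2 hx0)
  have hf0 : fS s 0 = 1 := by
    rw [fS, tsum_eq_single 0 (fun k hk => by simp [zero_pow hk])]
    simp [Cb_zero hs]
  have hkey : fS s x * (1 - x) ^ s = 1 := by
    simpa [hf0, Real.one_rpow] using hconst
  have hfx : fS s x = (1 - x) ^ (-s) := by
    rw [Real.rpow_neg (by linarith)]
    exact eq_inv_of_mul_eq_one_left hkey
  exact hfx ▸ (S1 x (Set.right_mem_Icc.2 hx0)).hasSum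


set_option maxHeartbeats 1000000 in
/-- Summed form of the binomial expansion (2.49): for a sequence `μ` of positive reals with
`μ j + λ ≥ c > α²` and `s > 0` with `∑ⱼ (μⱼ+λ)^(-s/2) < ∞`, one has
`∑ⱼ (√(μⱼ+λ) - α²/√(μⱼ+λ))^(-s) = ∑ₖ (Γ(s+k) α^(2k) / (k! Γ(s))) ∑ⱼ (μⱼ+λ)^(-s/2-k)`,
with all series convergent and the double series absolutely convergent. -/
theorem zeta_expansion_robin (μ : ℕ → ℝ) (hμ : ∀ j, 0 < μ j) (lam α c : ℝ)
    (hlam : 0 ≤ lam) (hc : ∀ j, c ≤ μ j + lam) (hcα : α ^ 2 < c)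
    (s : ℝ) (hs : 0 < s)
    (hsum : Summable fun j : ℕ => (μ j + lam) ^ (-(s / 2))) :
    Summable (fun j : ℕ =>
        (Real.sqrt (μ j + lam) - α ^ 2 / Real.sqrt (μ j + lam)) ^ (-s)) ∧
    (∀ k : ℕ, Summable fun j : ℕ => (μ j + lam) ^ (-(s / 2) - k)) ∧
    Summable (fun p : ℕ × ℕ =>
        ‖Real.Gamma (s + p.1) * α ^ (2 * p.1) / (Nat.factorial p.1 * Real.Gamma s)
          * (μ p.2 + lam) ^ (-(s / 2) - p.1)‖) ∧
    (∑' j : ℕ, (Real.sqrt (μ j + lam) - α ^ 2 / Real.sqrt (μ j + lam)) ^ (-s))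
      = ∑' k : ℕ, Real.Gamma (s + k) * α ^ (2 * k) / (Nat.factorial k * Real.Gamma s)
          * ∑' j : ℕ, (μ j + lam) ^ (-(s / 2) - k) := by
  have haj : ∀ j, 0 < μ j + lam := fun j => by linarith [hμ j]
  have hα2 : 0 ≤ α ^ 2 := sq_nonneg α
  have hc0 : 0 < c := lt_of_le_of_lt hα2 hcα
  set G : ℕ × ℕ → ℝ :=
    fun p => Cb s p.1 * α ^ (2 * p.1) * (μ p.2 + lam) ^ (-(s / 2) - (p.1 : ℝ)) with hG
  -- pointwise binomial expansion
  have hpt : ∀ j, HasSum (fun k : ℕ => G (k, j))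
      ((Real.sqrt (μ j + lam) - α ^ 2 / Real.sqrt (μ j + lam)) ^ (-s)) := by
    intro j
    set A : ℝ := μ j + lam with hA
    have hA0 : 0 < A := haj j
    have hcA : c ≤ A := hc j
    have hx0 : 0 ≤ α ^ 2 / A := by positivity
    have hx1 : α ^ 2 / A < 1 := (div_lt_one hA0).2 (lt_of_lt_of_le hcα hcA)
    have h := (binomial_hasSum hs hx0 hx1).mul_right (A ^ (-(s / 2)))
    have hApos : 0 < A - α ^ 2 := by linarith [lt_of_lt_of_le hcα hcA]
    have hB : 0 < Real.sqrt A := Real.sqrt_pos.2 hA0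
    -- value equality
    have hsplit : Real.sqrt A - α ^ 2 / Real.sqrt A = (A - α ^ 2) / Real.sqrt A := by
      rw [eq_div_iff hB.ne', sub_mul, div_mul_cancel₀ _ hB.ne', Real.mul_self_sqrt hA0.le]
    have h1x : 1 - α ^ 2 / A = (A - α ^ 2) / A := by field_simp
    have hBrs : (Real.sqrt A) ^ (-s) = A ^ (-(s / 2)) := by
      rw [Real.sqrt_eq_rpow, ← Real.rpow_mul hA0.le]
      congr 1
      ring
    have hAA : A ^ (-(s / 2)) * A ^ (-(s / 2)) = A ^ (-s) := by
      rw [← Real.rpow_add hA0]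
      congr 1
      ring
    have hval : (1 - α ^ 2 / A) ^ (-s) * A ^ (-(s / 2))
        = (Real.sqrt A - α ^ 2 / Real.sqrt A) ^ (-s) := by
      rw [hsplit, h1x, Real.div_rpow hApos.le hA0.le, Real.div_rpow hApos.le hB.le, hBrs]
      have h2 : A ^ (-s) ≠ 0 := (Real.rpow_pos_of_pos hA0 _).ne'
      have h3 : A ^ (-(s / 2)) ≠ 0 := (Real.rpow_pos_of_pos hA0 _).ne'
      rw [div_mul_eq_mul_div, div_eq_div_iff h2 h3]
      linear_combination (A - α ^ 2) ^ (-s) * hAA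
    rw [hval] at h
    have hfun : (fun k : ℕ => Cb s k * (α ^ 2 / A) ^ k * A ^ (-(s / 2)))
        = fun k : ℕ => G (k, j) := by
      funext k
      rw [hG]
      have e1 : A ^ (-(s / 2) - (k : ℝ)) = A ^ (-(s / 2)) / A ^ k := by
        rw [Real.rpow_sub hA0, Real.rpow_natCast]
      simp only []
      rw [e1, pow_mul, div_pow]
      have : (A : ℝ) ^ k ≠ 0 := (pow_pos hA0 k).ne'
      field_simp
    exact hfun ▸ h
  -- nonnegativity of G
  have hα2k : ∀ k : ℕ, (0:ℝ) ≤ α ^ (2 * k) := fun k => by rw [pow_mul]; positivity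
  have hGnn : ∀ p : ℕ × ℕ, 0 ≤ G p := fun p => by
    rw [hG]
    exact mul_nonneg (mul_nonneg (Cb_pos hs p.1).le (hα2k p.1))
      (Real.rpow_pos_of_pos (haj p.2) _).le
  -- termwise bound of the inner sums
  have hbd : ∀ (k j : ℕ), (μ j + lam) ^ (-(s / 2) - (k : ℝ))
      ≤ (μ j + lam) ^ (-(s / 2)) * (c ^ k)⁻¹ := by
    intro k j
    rw [Real.rpow_sub (haj j), Real.rpow_natCast, div_eq_mul_inv]
    refine mul_le_mul_of_nonneg_left ?_ (Real.rpow_pos_of_pos (haj j) _).le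
    exact inv_anti₀ (pow_pos hc0 k) (pow_le_pow_left₀ hc0.le (hc j) k)
  -- conclusion 2
  have sum1 : ∀ k : ℕ, Summable fun j : ℕ => (μ j + lam) ^ (-(s / 2) - (k : ℝ)) := fun k =>
    (hsum.mul_right ((c ^ k)⁻¹)).of_nonneg_of_le
      (fun j => (Real.rpow_pos_of_pos (haj j) _).le) (fun j => hbd k j)
  -- summability of G on the product
  have hslice : ∀ k : ℕ, Summable fun j : ℕ => G (k, j) := fun k =>
    (sum1 k).mul_left (Cb s k * α ^ (2 * k))
  have hT : ∀ k : ℕ, ∑' j : ℕ, (μ j + lam) ^ (-(s / 2) - (k : ℝ))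
      ≤ (∑' j : ℕ, (μ j + lam) ^ (-(s / 2))) * (c ^ k)⁻¹ := by
    intro k
    calc ∑' j : ℕ, (μ j + lam) ^ (-(s / 2) - (k : ℝ))
        ≤ ∑' j : ℕ, (μ j + lam) ^ (-(s / 2)) * (c ^ k)⁻¹ :=
          Summable.tsum_le_tsum (hbd k) (sum1 k) (hsum.mul_right _)
      _ = (∑' j : ℕ, (μ j + lam) ^ (-(s / 2))) * (c ^ k)⁻¹ := tsum_mul_right
  have hxc0 : 0 ≤ α ^ 2 / c := by positivity
  have hxc1 : α ^ 2 / c < 1 := (div_lt_one hc0).2 hcα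
  have hmaj : Summable fun k : ℕ =>
      Cb s k * (α ^ 2 / c) ^ k * (∑' j : ℕ, (μ j + lam) ^ (-(s / 2))) :=
    (binomial_hasSum hs hxc0 hxc1).summable.mul_right _
  have hcol : Summable fun k : ℕ => ∑' j : ℕ, G (k, j) := by
    refine hmaj.of_nonneg_of_le (fun k => tsum_nonneg fun j => hGnn (k, j)) (fun k => ?_)
    have e1 : ∑' j : ℕ, G (k, j)
        = Cb s k * α ^ (2 * k) * ∑' j : ℕ, (μ j + lam) ^ (-(s / 2) - (k : ℝ)) := by
      simp only [hG]; exact tsum_mul_left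
    rw [e1]
    calc Cb s k * α ^ (2 * k) * ∑' j : ℕ, (μ j + lam) ^ (-(s / 2) - (k : ℝ))
        ≤ Cb s k * α ^ (2 * k) * ((∑' j : ℕ, (μ j + lam) ^ (-(s / 2))) * (c ^ k)⁻¹) :=
          mul_le_mul_of_nonneg_left (hT k) (mul_nonneg (Cb_pos hs k).le (hα2k k))
      _ = Cb s k * (α ^ 2 / c) ^ k * (∑' j : ℕ, (μ j + lam) ^ (-(s / 2))) := by
          rw [div_pow, pow_mul, div_eq_mul_inv]
          ring
  have hGsum : Summable G := (summable_prod_of_nonneg hGnn).2 ⟨hslice, hcol⟩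
  -- coefficient identity
  have hcoef : ∀ k : ℕ, Real.Gamma (s + k) * α ^ (2 * k) / (Nat.factorial k * Real.Gamma s)
      = Cb s k * α ^ (2 * k) := fun k => by rw [Cb]; ring
  -- conclusion 3
  have hnorm : (fun p : ℕ × ℕ =>
      ‖Real.Gamma (s + p.1) * α ^ (2 * p.1) / (Nat.factorial p.1 * Real.Gamma s)
        * (μ p.2 + lam) ^ (-(s / 2) - p.1)‖) = G := by
    funext p
    rw [hcoef p.1, Real.norm_eq_abs]
    exact abs_of_nonneg (hGnn p)
  -- conclusion 1
  have hswap : Summable fun q : ℕ × ℕ => G (q.2, q.1) := hGsum.prod_symm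
  have hrow : Summable fun j : ℕ => ∑' k : ℕ, G (k, j) :=
    ((summable_prod_of_nonneg fun q : ℕ × ℕ => hGnn (q.2, q.1)).1 hswap).2
  have hsum1 : Summable (fun j : ℕ =>
      (Real.sqrt (μ j + lam) - α ^ 2 / Real.sqrt (μ j + lam)) ^ (-s)) :=
    hrow.congr fun j => (hpt j).tsum_eq
  refine ⟨hsum1, sum1, hnorm ▸ hGsum, ?_⟩
  calc (∑' j : ℕ, (Real.sqrt (μ j + lam) - α ^ 2 / Real.sqrt (μ j + lam)) ^ (-s))
      = ∑' j : ℕ, ∑' k : ℕ, G (k, j) := tsum_congr fun j => ((hpt j).tsum_eq).symm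
    _ = ∑' k : ℕ, ∑' j : ℕ, G (k, j) :=
        (Summable.tsum_comm (f := fun k j => G (k, j)) hGsum)
    _ = ∑' k : ℕ, Real.Gamma (s + k) * α ^ (2 * k) / (Nat.factorial k * Real.Gamma s)
          * ∑' j : ℕ, (μ j + lam) ^ (-(s / 2) - k) := by
        refine tsum_congr fun k => ?_
        rw [hcoef k]
        simp only [hG]
        exact tsum_mul_left
end

section
/- Let L > 0 and λ > 0 be real numbers, and let u, v : ℝ → ℝ be functions such that for every x ∈ [0, L], u has derivative v(x) at x and v has derivative λ·u(x) at x (so u'' = λu on [0,L]). Then −v(0) = ( √λ·(e^{2√λ L} + 1)/(e^{2√λ L} − 1) )·u(0) − ( 2√λ·e^{√λ L}/(e^{2√λ L} − 1) )·u(L), and v(L) = −( 2√λ·e^{√λ L}/(e^{2√λ L} − 1) )·u(0) + ( √λ·(e^{2√λ L} + 1)/(e^{2√λ L} − 1) )·u(L). -/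
/-- The Dirichlet-to-Neumann matrix (4.19): if `u'' = λ u` on `[0, L]` (with `u' = v`),
then the outward normal derivatives `(-v 0, v L)` are the given explicit 2×2 matrix
applied to the boundary values `(u 0, u L)`. -/
theorem dirichlet_to_neumann_interval (L lam : ℝ) (hL : 0 < L) (hlam : 0 < lam)
    (u v : ℝ → ℝ)
    (hu : ∀ x ∈ Set.Icc (0 : ℝ) L, HasDerivAt u (v x) x)
    (hv : ∀ x ∈ Set.Icc (0 : ℝ) L, HasDerivAt v (lam * u x) x) :
    -v 0 = (Real.sqrt lam * (Real.exp (2 * Real.sqrt lam * L) + 1)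
              / (Real.exp (2 * Real.sqrt lam * L) - 1)) * u 0
          - (2 * Real.sqrt lam * Real.exp (Real.sqrt lam * L)
              / (Real.exp (2 * Real.sqrt lam * L) - 1)) * u L ∧
    v L = -(2 * Real.sqrt lam * Real.exp (Real.sqrt lam * L)
              / (Real.exp (2 * Real.sqrt lam * L) - 1)) * u 0
          + (Real.sqrt lam * (Real.exp (2 * Real.sqrt lam * L) + 1)
              / (Real.exp (2 * Real.sqrt lam * L) - 1)) * u L := by
  set s := Real.sqrt lam with hs_def
  have hs : 0 < s := Real.sqrt_pos.2 hlam
  have hs2 : s * s = lam := Real.mul_self_sqrt hlam.le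
  set A : ℝ := (u 0 + v 0 / s) / 2 with hA
  set B : ℝ := (u 0 - v 0 / s) / 2 with hB
  -- the explicit solution
  set g : ℝ → ℝ × ℝ := fun x =>
    (A * Real.exp (s * x) + B * Real.exp (-(s * x)),
     s * A * Real.exp (s * x) - s * B * Real.exp (-(s * x))) with hg_def
  -- the vector field as a continuous linear map
  set F : ℝ × ℝ →L[ℝ] ℝ × ℝ :=
    (ContinuousLinearMap.snd ℝ ℝ ℝ).prod (lam • ContinuousLinearMap.fst ℝ ℝ ℝ) with hF
  have hFapply : ∀ p : ℝ × ℝ, F p = (p.2, lam * p.1) := fun p => rfl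
  set f : ℝ → ℝ × ℝ := fun x => (u x, v x) with hf_def
  have hf' : ∀ x ∈ Set.Icc (0 : ℝ) L, HasDerivAt f (F (f x)) x := by
    intro x hx
    rw [hFapply]
    exact (hu x hx).prodMk (hv x hx)
  have hgexp : ∀ x : ℝ, HasDerivAt (fun y => Real.exp (s * y)) (s * Real.exp (s * x)) x := by
    intro x
    have h1 : HasDerivAt (fun y : ℝ => s * y) s x := by
      simpa using (hasDerivAt_id x).const_mul s
    simpa [mul_comm] using h1.exp
  have hgexp' : ∀ x : ℝ, HasDerivAt (fun y => Real.exp (-(s * y))) (-(s * Real.exp (-(s * x)))) x := by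
    intro x
    have h1 : HasDerivAt (fun y : ℝ => -(s * y)) (-s) x := by
      exact (show HasDerivAt (fun y : ℝ => s * y) s x by simpa using (hasDerivAt_id x).const_mul s).neg
    simpa [mul_comm, neg_mul, mul_neg] using h1.exp
  have hg' : ∀ x : ℝ, HasDerivAt g (F (g x)) x := by
    intro x
    rw [hFapply]
    have h1 : HasDerivAt (fun y => A * Real.exp (s * y) + B * Real.exp (-(s * y)))
        (s * A * Real.exp (s * x) - s * B * Real.exp (-(s * x))) x := by
      have := ((hgexp x).const_mul A).add ((hgexp' x).const_mul B)
      exact this.congr_deriv (by ring)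
    have h2 : HasDerivAt (fun y => s * A * Real.exp (s * y) - s * B * Real.exp (-(s * y)))
        (lam * (A * Real.exp (s * x) + B * Real.exp (-(s * x)))) x := by
      have := ((hgexp x).const_mul (s * A)).sub ((hgexp' x).const_mul (s * B))
      exact this.congr_deriv (by rw [← hs2]; ring)
    exact h1.prodMk h2
  have h0 : f 0 = g 0 := by
    simp only [hf_def, hg_def, mul_zero, neg_zero, Real.exp_zero, mul_one]
    have h1 : A + B = u 0 := by rw [hA, hB]; ring
    have h2 : s * A - s * B = v 0 := by
      rw [hA, hB]; field_simp; ring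
    exact Prod.ext h1.symm h2.symm
  have heq : Set.EqOn f g (Set.Icc 0 L) := by
    apply ODE_solution_unique (v := fun _ p => F p) (K := ‖F‖₊)
        (fun _ => F.lipschitz) _ _ _ _ h0
    · exact fun x hx => (hf' x hx).continuousAt.continuousWithinAt
    · exact fun x hx => ((hf' x (Set.mem_Icc_of_Ico hx)).hasDerivWithinAt)
    · exact fun x hx => (hg' x).continuousAt.continuousWithinAt
    · exact fun x hx => (hg' x).hasDerivWithinAt
  have hfL := heq (Set.right_mem_Icc.2 hL.le)
  have hf0 := heq (Set.left_mem_Icc.2 hL.le)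
  set E := Real.exp (s * L) with hE_def
  have hE1 : 1 < E := Real.one_lt_exp_iff.2 (by positivity : (0:ℝ) < s * L)
  have hEpos : 0 < E := lt_trans one_pos hE1
  have hE2 : Real.exp (2 * s * L) = E * E := by
    rw [hE_def, ← Real.exp_add]; ring_nf
  have hEinv : Real.exp (-(s * L)) = E⁻¹ := by rw [Real.exp_neg]
  have huL : u L = A * E + B * E⁻¹ := by
    have := congrArg Prod.fst hfL
    simpa [hf_def, hg_def, hEinv] using this
  have hvL : v L = s * A * E - s * B * E⁻¹ := by
    have := congrArg Prod.snd hfL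
    simpa [hf_def, hg_def, hEinv] using this
  have hu0 : u 0 = A + B := by rw [hA, hB]; ring
  have hv0 : v 0 = s * A - s * B := by rw [hA, hB]; field_simp; ring
  have hne : E * E - 1 ≠ 0 := by nlinarith
  have hEne : E ≠ 0 := ne_of_gt hEpos
  have hne2 : E ^ 2 - 1 ≠ 0 := by nlinarith
  constructor
  · rw [hv0, hu0, huL, hE2]
    field_simp
    ring
  · rw [hvL, hu0, huL, hE2]
    field_simp
    ring
end

section
/- Let x > 0, a > 0, b > 0, and α be real numbers with x ≠ α and x ≠ −α, and suppose x·tanh(ax) + α ≠ 0 and x·tanh(bx) − α ≠ 0. Then 1/( x·tanh(ax) + α ) + 1/( x·tanh(bx) − α ) = ( 2x/(x² − α²) ) · ( 1 − e^{−2(a+b)x} ) / ( (1 − ((x−α)/(x+α))·e^{−2ax}) · (1 − ((x+α)/(x−α))·e^{−2bx}) ), and in particular the two factors in the denominator on the right-hand side are nonzero. -/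
lemma tanh_eq_exp' (t : ℝ) :
    Real.tanh t = (1 - Real.exp (-(2 * t))) / (1 + Real.exp (-(2 * t))) := by
  have he : (0:ℝ) < Real.exp t := Real.exp_pos t
  have hc : (0:ℝ) < Real.cosh t := Real.cosh_pos t
  have hp : (0:ℝ) < 1 + Real.exp (-(2 * t)) := by positivity
  have h2t : Real.exp (-(2 * t)) = Real.exp (-t) * Real.exp (-t) := by
    rw [← Real.exp_add]; ring_nf
  have hneg : Real.exp (-t) = (Real.exp t)⁻¹ := Real.exp_neg t
  rw [Real.tanh_eq_sinh_div_cosh, Real.sinh_eq, Real.cosh_eq, h2t, hneg]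
  rw [Real.cosh_eq, hneg] at hc
  field_simp

/-- Mode-wise identity behind (4.36): for `x, a, b > 0` and `x ≠ ±α`, with nonvanishing
denominators,
`1/(x tanh(ax) + α) + 1/(x tanh(bx) - α)
  = (2x/(x²-α²)) (1 - e^{-2(a+b)x}) / ((1 - ((x-α)/(x+α))e^{-2ax})(1 - ((x+α)/(x-α))e^{-2bx}))`,
and the two factors in the denominator on the right are nonzero. -/
theorem robin_cut_mode_identity (x a b α : ℝ) (hx : 0 < x) (ha : 0 < a) (hb : 0 < b)
    (h1 : x ≠ α) (h2 : x ≠ -α)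
    (hd1 : x * Real.tanh (a * x) + α ≠ 0) (hd2 : x * Real.tanh (b * x) - α ≠ 0) :
    1 / (x * Real.tanh (a * x) + α) + 1 / (x * Real.tanh (b * x) - α)
      = (2 * x / (x ^ 2 - α ^ 2)) * (1 - Real.exp (-2 * (a + b) * x))
          / ((1 - ((x - α) / (x + α)) * Real.exp (-2 * a * x))
            * (1 - ((x + α) / (x - α)) * Real.exp (-2 * b * x))) ∧
    1 - ((x - α) / (x + α)) * Real.exp (-2 * a * x) ≠ 0 ∧
    1 - ((x + α) / (x - α)) * Real.exp (-2 * b * x) ≠ 0 := by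
  have hA : x + α ≠ 0 := fun h => h2 (by linarith)
  have hB : x - α ≠ 0 := sub_ne_zero.mpr h1
  set u := Real.exp (-2 * a * x) with hudef
  set v := Real.exp (-2 * b * x) with hvdef
  have hu : 0 < u := Real.exp_pos _
  have hv : 0 < v := Real.exp_pos _
  have hu1 : (0:ℝ) < 1 + u := by linarith
  have hv1 : (0:ℝ) < 1 + v := by linarith
  have e1 : x * Real.tanh (a * x) + α = ((x + α) - (x - α) * u) / (1 + u) := by
    rw [tanh_eq_exp', show (-(2 * (a * x))) = -2 * a * x by ring, ← hudef]
    field_simp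
    ring
  have e2 : x * Real.tanh (b * x) - α = ((x - α) - (x + α) * v) / (1 + v) := by
    rw [tanh_eq_exp', show (-(2 * (b * x))) = -2 * b * x by ring, ← hvdef]
    field_simp
    ring
  have n1 : (x + α) - (x - α) * u ≠ 0 := by
    intro h; apply hd1; rw [e1, h, zero_div]
  have n2 : (x - α) - (x + α) * v ≠ 0 := by
    intro h; apply hd2; rw [e2, h, zero_div]
  have f1 : 1 - ((x - α) / (x + α)) * u = ((x + α) - (x - α) * u) / (x + α) := by
    field_simp
  have f2 : 1 - ((x + α) / (x - α)) * v = ((x - α) - (x + α) * v) / (x - α) := by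
    field_simp
  have F1 : 1 - ((x - α) / (x + α)) * u ≠ 0 := by
    rw [f1]; exact div_ne_zero n1 hA
  have F2 : 1 - ((x + α) / (x - α)) * v ≠ 0 := by
    rw [f2]; exact div_ne_zero n2 hB
  refine ⟨?_, F1, F2⟩
  have huv : Real.exp (-2 * (a + b) * x) = u * v := by
    rw [hudef, hvdef, ← Real.exp_add]; ring_nf
  rw [e1, e2, huv, f1, f2]
  rw [show x ^ 2 - α ^ 2 = (x + α) * (x - α) by ring]
  field_simp
  ring
end

section
/- Let k ≥ 1 be an integer and define g : ℝ → ℝ by g(s) = 2·Γ(s/2 + 1)·( ∏_{p=1}^{k-1}(s + p) ) / Γ((s+k)/2), where Γ is the real Gamma function. Then: (a) for every s > 0, g(s) = Γ(s+k)·Γ(s/2) / ( Γ(s)·Γ((s+k)/2) ); and (b) the derivative of g at 0 equals ( Γ(k)/Γ(k/2) )·( 2·∑_{p=1}^{k-1} 1/p − c_k ), where c_k = ∑_{p=1}^{k/2 − 1} 1/p if k is even (interpreted as 0 when k = 2), and c_k = −2·log 2 + 2·∑_{p=1}^{⌊k/2⌋} 1/(2p−1) if k is odd (the sum interpreted as 0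 when k = 1). -/
open Real Finset

private lemma prodIccRange (n : ℕ) (f : ℕ → ℝ) :
    ∏ p ∈ Icc 1 n, f p = ∏ j ∈ range n, f (j + 1) := by
  induction n with
  | zero => simp
  | succ n ih => rw [Finset.prod_Icc_succ_top (by omega), ih, Finset.prod_range_succ]

private lemma sumIccRange (n : ℕ) (f : ℕ → ℝ) :
    ∑ p ∈ Icc 1 n, f p = ∑ j ∈ range n, f (j + 1) := by
  induction n with
  | zero => simp
  | succ n ih => rw [Finset.sum_Icc_succ_top (by omega), ih, Finset.sum_range_succ]

private lemma GammaShift (x : ℝ) (hx : 0 < x) (n : ℕ) :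
    Real.Gamma (x + n) = Real.Gamma x * ∏ j ∈ range n, (x + j) := by
  induction n with
  | zero => simp
  | succ n ih =>
    have h1 : (x + ((n : ℕ) + 1 : ℕ) : ℝ) = (x + n) + 1 := by push_cast; ring
    have h2 : (x + (n : ℝ)) ≠ 0 := by positivity
    rw [h1, Real.Gamma_add_one h2, ih, Finset.prod_range_succ]
    ring

private lemma hasDerivAtProd (u : Finset ℕ) (a : ℝ) (c : ℕ → ℝ) (hc : ∀ j ∈ u, 0 < c j) :
    HasDerivAt (fun s : ℝ => ∏ j ∈ u, (s * a + c j))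
      ((∏ j ∈ u, c j) * (a * ∑ j ∈ u, 1 / c j)) 0 := by
  have h := HasDerivAt.fun_finsetProd (u := u) (f := fun j (s : ℝ) => s * a + c j)
    (f' := fun _ => a) (x := (0 : ℝ))
    (fun i _ => by simpa using ((hasDerivAt_id (0 : ℝ)).mul_const a).add_const (c i))
  refine h.congr_deriv ?_
  symm
  simp only [zero_mul, zero_add, smul_eq_mul]
  simp only [Finset.mul_sum]
  refine Finset.sum_congr rfl fun j hj => ?_
  rw [← Finset.mul_prod_erase u c hj]
  field_simp [(hc j hj).ne']

/-- Gamma at a positive natural. -/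
private lemma GammaNat (k : ℕ) (hk : 1 ≤ k) :
    Real.Gamma (k : ℝ) = ∏ p ∈ Icc 1 (k - 1), (p : ℝ) := by
  have h1 : ((k : ℝ)) = ((k - 1 : ℕ) : ℝ) + 1 := by
    have : (k - 1 : ℕ) + 1 = k := by omega
    exact_mod_cast (congrArg (Nat.cast : ℕ → ℝ) this).symm
  rw [h1, Real.Gamma_nat_eq_factorial, prodIccRange]
  rw [show ((Nat.factorial (k-1) : ℕ) : ℝ) = ((∏ j ∈ range (k-1), (j+1) : ℕ) : ℝ) by
    rw [Finset.prod_range_add_one_eq_factorial]]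
  push_cast
  rfl

/-- The Gamma computation (2.58)–(2.59): for `k ≥ 1`, the function
`g(s) = 2 Γ(s/2+1) ∏_{p=1}^{k-1}(s+p) / Γ((s+k)/2)` equals
`Γ(s+k)Γ(s/2)/(Γ(s)Γ((s+k)/2))` for `s > 0`, and its derivative at `0` is
`(Γ(k)/Γ(k/2)) (2 ∑_{p=1}^{k-1} 1/p - c_k)` with `c_k` as in (2.59). -/
theorem gamma_quotient_deriv_at_zero (k : ℕ) (hk : 1 ≤ k) :
    (∀ s : ℝ, 0 < s →
      2 * Real.Gamma (s / 2 + 1) * (∏ p ∈ Finset.Icc 1 (k - 1), (s + (p : ℝ)))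
          / Real.Gamma ((s + k) / 2)
        = Real.Gamma (s + k) * Real.Gamma (s / 2)
            / (Real.Gamma s * Real.Gamma ((s + k) / 2))) ∧
    HasDerivAt
      (fun s : ℝ =>
        2 * Real.Gamma (s / 2 + 1) * (∏ p ∈ Finset.Icc 1 (k - 1), (s + (p : ℝ)))
          / Real.Gamma ((s + k) / 2))
      ((Real.Gamma k / Real.Gamma ((k : ℝ) / 2))
        * (2 * (∑ p ∈ Finset.Icc 1 (k - 1), (1 : ℝ) / (p : ℝ))
            - (if k % 2 = 0 then ∑ p ∈ Finset.Icc 1 (k / 2 - 1), (1 : ℝ) / (p : ℝ)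
               else -2 * Real.log 2
                 + 2 * ∑ p ∈ Finset.Icc 1 (k / 2), (1 : ℝ) / (2 * (p : ℝ) - 1))))
      0 := by
  constructor
  · intro s hs
    have h2 : Real.Gamma (s / 2 + 1) = s / 2 * Real.Gamma (s / 2) :=
      Real.Gamma_add_one (by positivity)
    have hks : Real.Gamma (s + k) = Real.Gamma s * ∏ j ∈ range k, (s + j) := GammaShift s hs k
    have hsplit : (∏ j ∈ range k, (s + (j : ℝ))) = (∏ p ∈ Icc 1 (k - 1), (s + (p : ℝ))) * s := by
      obtain ⟨n, rfl⟩ : ∃ n, k = n + 1 := ⟨k - 1, by omega⟩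
      rw [Finset.prod_range_succ']
      simp only [Nat.add_sub_cancel, Nat.cast_zero, add_zero]
      rw [prodIccRange]
    have hΓs : Real.Gamma s ≠ 0 := (Real.Gamma_pos_of_pos hs).ne'
    have hΓ2 : Real.Gamma ((s + k) / 2) ≠ 0 := by
      have : (0:ℝ) < (s + k) / 2 := by positivity
      exact (Real.Gamma_pos_of_pos this).ne'
    rw [h2, hks, hsplit]
    field_simp
  · rcases Nat.even_or_odd k with ⟨m, hm⟩ | ⟨m, hm⟩
    ·
      have hm1 : 1 ≤ m := by omega
      -- the auxiliary function
      have hP := hasDerivAtProd (Icc 1 (k - 1)) 1 (fun p => (p : ℝ))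
        (fun p hp => by
          have := (Finset.mem_Icc.mp hp).1
          exact_mod_cast Nat.pos_of_ne_zero (by omega))
      have hQ := hasDerivAtProd (range (m - 1)) (1/2) (fun j => (j : ℝ) + 1)
        (fun j _ => by positivity)
      have hQ0 : (∏ j ∈ range (m - 1), ((0:ℝ) * (1/2) + ((j : ℝ) + 1))) ≠ 0 := by
        refine (Finset.prod_pos fun j _ => by positivity).ne'
      have hh := (hP.const_mul 2).div hQ hQ0
      -- eventual equality
      have hev : (fun s : ℝ =>
            2 * Real.Gamma (s / 2 + 1) * (∏ p ∈ Finset.Icc 1 (k - 1), (s + (p : ℝ)))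
              / Real.Gamma ((s + k) / 2))
          =ᶠ[nhds (0:ℝ)]
          (fun s : ℝ => 2 * (∏ p ∈ Icc 1 (k-1), (s * 1 + (p:ℝ)))
              / (∏ j ∈ range (m-1), (s * (1/2) + ((j:ℝ) + 1)))) := by
        refine Filter.eventuallyEq_of_mem (Ioo_mem_nhds (by norm_num : (-1:ℝ) < 0) one_pos) ?_
        intro s hs
        obtain ⟨hs1, hs2⟩ := hs
        have hx : (0:ℝ) < s / 2 + 1 := by linarith
        have hsh : Real.Gamma ((s + k) / 2)
            = Real.Gamma (s/2 + 1) * ∏ j ∈ range (m-1), (s/2 + 1 + (j:ℝ)) := by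
          have h := GammaShift (s/2 + 1) hx (m-1)
          rw [show (s/2 + 1 + ((m-1 : ℕ):ℝ)) = (s + (k:ℝ))/2 by
            push_cast [hm, Nat.cast_sub hm1]; ring] at h
          exact h
        simp only
        rw [hsh]
        rw [show (∏ p ∈ Icc 1 (k-1), (s + (p:ℝ))) = ∏ p ∈ Icc 1 (k-1), (s * 1 + (p:ℝ)) from
          Finset.prod_congr rfl fun p _ => by ring]
        rw [show (∏ j ∈ range (m-1), (s/2 + 1 + (j:ℝ)))
            = ∏ j ∈ range (m-1), (s * (1/2) + ((j:ℝ) + 1)) from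
          Finset.prod_congr rfl fun j _ => by ring]
        rw [show 2 * Real.Gamma (s/2+1) * (∏ p ∈ Icc 1 (k-1), (s * 1 + (p:ℝ)))
            = Real.Gamma (s/2+1) * (2 * ∏ p ∈ Icc 1 (k-1), (s * 1 + (p:ℝ))) by ring,
          mul_div_mul_left _ _ (Real.Gamma_pos_of_pos hx).ne']
      have hg := hh.congr_of_eventuallyEq hev
      refine hg.congr_deriv ?_
      symm
      -- now the value identity
      have hGk : Real.Gamma (k : ℝ) = ∏ p ∈ Icc 1 (k - 1), (p : ℝ) := GammaNat k hk
      have hGk2 : Real.Gamma ((k : ℝ)/2) = ∏ j ∈ range (m - 1), ((j:ℝ) + 1) := by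
        rw [show ((k:ℝ)/2) = ((m:ℕ):ℝ) by push_cast [hm]; ring, GammaNat m hm1, prodIccRange]
        exact Finset.prod_congr rfl fun j _ => by push_cast; ring
      have hsum : (∑ p ∈ Icc 1 (k / 2 - 1), (1:ℝ) / (p:ℝ))
          = ∑ j ∈ range (m - 1), 1 / ((j:ℝ) + 1) := by
        rw [show k / 2 - 1 = m - 1 by omega, sumIccRange]
        exact Finset.sum_congr rfl fun j _ => by push_cast; ring
      rw [if_pos (by omega : k % 2 = 0), hGk, hGk2, hsum]
      simp only [zero_mul, zero_add]
      have hQ0' : (∏ j ∈ range (m - 1), ((j : ℝ) + 1)) ≠ 0 :=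
        (Finset.prod_pos fun j _ => by positivity).ne'
      field_simp
    ·
      set d := deriv Real.Gamma 1 with hd_def
      have hd : HasDerivAt Real.Gamma d 1 :=
        (Real.differentiableAt_Gamma (fun n => by
          intro h
          have h0 : (0:ℝ) ≤ n := n.cast_nonneg
          linarith)).hasDerivAt
      -- derivative of s ↦ Γ(s/2+1) at 0
      have hA : HasDerivAt (fun s : ℝ => Real.Gamma (s / 2 + 1)) (d * (1/2)) 0 := by
        have hi : HasDerivAt (fun s : ℝ => s / 2 + 1) (1/2) 0 := by
          simpa using ((hasDerivAt_id (0:ℝ)).div_const 2).add_const 1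
        have hd' : HasDerivAt Real.Gamma d ((0:ℝ) / 2 + 1) := by norm_num; exact hd
        exact hd'.comp 0 hi
      have hC : HasDerivAt (fun s : ℝ => Real.Gamma (s + 1)) (d * 1) 0 := by
        have hi : HasDerivAt (fun s : ℝ => s + 1) 1 0 := by
          simpa using (hasDerivAt_id (0:ℝ)).add_const 1
        have hd' : HasDerivAt Real.Gamma d ((0:ℝ) + 1) := by norm_num; exact hd
        exact hd'.comp 0 hi
      have hB : HasDerivAt (fun s : ℝ => (2:ℝ) ^ s) (Real.log 2) 0 := by
        simpa using (Real.hasStrictDerivAt_const_rpow two_pos 0).hasDerivAt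
      have hP := hasDerivAtProd (Icc 1 (k - 1)) 1 (fun p => (p : ℝ))
        (fun p hp => by
          have := (Finset.mem_Icc.mp hp).1
          exact_mod_cast Nat.pos_of_ne_zero (by omega))
      have hR := hasDerivAtProd (range m) (1/2) (fun j => (j : ℝ) + 1/2)
        (fun j _ => by positivity)
      have hR0 : (∏ j ∈ range m, ((0:ℝ) * (1/2) + ((j : ℝ) + 1/2))) ≠ 0 :=
        (Finset.prod_pos fun j _ => by positivity).ne'
      have hπ : (0:ℝ) < Real.sqrt Real.pi := Real.sqrt_pos.mpr Real.pi_pos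
      have hD1 : HasDerivAt (fun s : ℝ => Real.sqrt Real.pi * Real.Gamma (s + 1))
          (Real.sqrt Real.pi * (d * 1)) 0 := hC.const_mul _
      have hD1ne : Real.sqrt Real.pi * Real.Gamma ((0:ℝ) + 1) ≠ 0 := by
        norm_num [Real.Gamma_one]; positivity
      have hN := (((hA.mul hA).const_mul 2).mul hB).mul hP
      have hquot := hN.div hD1 hD1ne
      have hh := hquot.div hR hR0
      -- eventual equality
      have hev : (fun s : ℝ =>
            2 * Real.Gamma (s / 2 + 1) * (∏ p ∈ Finset.Icc 1 (k - 1), (s + (p : ℝ)))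
              / Real.Gamma ((s + k) / 2))
          =ᶠ[nhds (0:ℝ)]
          (fun s : ℝ =>
            2 * (Real.Gamma (s / 2 + 1) * Real.Gamma (s / 2 + 1)) * (2:ℝ) ^ s
                * (∏ p ∈ Icc 1 (k-1), (s * 1 + (p:ℝ)))
              / (Real.sqrt Real.pi * Real.Gamma (s + 1))
              / (∏ j ∈ range m, (s * (1/2) + ((j:ℝ) + 1/2)))) := by
        refine Filter.eventuallyEq_of_mem (Ioo_mem_nhds (by norm_num : (-1:ℝ) < 0) one_pos) ?_
        intro s hs
        obtain ⟨hs1, hs2⟩ := hs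
        have hx1 : (0:ℝ) < (s + 1) / 2 := by linarith
        have hx2 : (0:ℝ) < s / 2 + 1 := by linarith
        have hx3 : (0:ℝ) < s + 1 := by linarith
        have hsh : Real.Gamma ((s + k) / 2)
            = Real.Gamma ((s+1)/2) * ∏ j ∈ range m, ((s+1)/2 + (j:ℝ)) := by
          have h := GammaShift ((s+1)/2) hx1 m
          rw [show ((s+1)/2 + ((m : ℕ):ℝ)) = (s + (k:ℝ))/2 by push_cast [hm]; ring] at h
          exact h
        have hdup : Real.Gamma ((s+1)/2) * Real.Gamma (s/2 + 1)
            = Real.Gamma (s+1) * (2:ℝ) ^ (-s) * Real.sqrt Real.pi := by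
          have h := Real.Gamma_mul_Gamma_add_half ((s+1)/2)
          rw [show (1:ℝ) - 2 * ((s+1)/2) = -s by ring, show (s+1)/2 + 1/2 = s/2 + 1 by ring,
            show 2 * ((s+1)/2) = s + 1 by ring] at h
          exact h
        have h2s : (2:ℝ) ^ (-s) * (2:ℝ) ^ s = 1 := by
          rw [← Real.rpow_add two_pos]; norm_num
        simp only
        rw [hsh]
        rw [show (∏ p ∈ Icc 1 (k-1), (s + (p:ℝ))) = ∏ p ∈ Icc 1 (k-1), (s * 1 + (p:ℝ)) from
          Finset.prod_congr rfl fun p _ => by ring]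
        rw [show (∏ j ∈ range m, ((s+1)/2 + (j:ℝ)))
            = ∏ j ∈ range m, (s * (1/2) + ((j:ℝ) + 1/2)) from
          Finset.prod_congr rfl fun j _ => by ring]
        rw [← div_div]
        congr 1
        have hG1 : Real.Gamma ((s+1)/2) ≠ 0 := (Real.Gamma_pos_of_pos hx1).ne'
        have hΓ : Real.Gamma (s+1) ≠ 0 := (Real.Gamma_pos_of_pos hx3).ne'
        rw [div_eq_div_iff hG1 (mul_ne_zero hπ.ne' hΓ)]
        set A := Real.Gamma (s/2 + 1)
        set G1 := Real.Gamma ((s+1)/2)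
        set P := ∏ p ∈ Icc 1 (k-1), (s * 1 + (p:ℝ))
        set Γ1 := Real.Gamma (s+1)
        linear_combination (-(2*A*(2:ℝ)^s*P)) * hdup + (-(2*A*P*Γ1*Real.sqrt Real.pi)) * h2s
      have hg := hh.congr_of_eventuallyEq hev
      refine hg.congr_deriv ?_
      symm
      -- value identity
      have hGk : Real.Gamma (k : ℝ) = ∏ p ∈ Icc 1 (k - 1), (p : ℝ) := GammaNat k hk
      have hGk2 : Real.Gamma ((k : ℝ)/2)
          = Real.sqrt Real.pi * ∏ j ∈ range m, ((j:ℝ) + 1/2) := by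
        have h := GammaShift (1/2) (by norm_num) m
        rw [show ((1:ℝ)/2 + (m:ℝ)) = (k:ℝ)/2 by push_cast [hm]; ring] at h
        rw [h, Real.Gamma_one_half_eq]
        congr 1
        exact Finset.prod_congr rfl fun j _ => by ring
      have hsum : (∑ p ∈ Icc 1 (k / 2), (1:ℝ) / (2 * (p:ℝ) - 1))
          = (1/2) * ∑ j ∈ range m, 1 / ((j:ℝ) + 1/2) := by
        rw [show k / 2 = m by omega, sumIccRange, Finset.mul_sum]
        refine Finset.sum_congr rfl fun j _ => ?_
        push_cast
        have e1 : (2:ℝ) * ((j:ℝ) + 1) - 1 = 2 * (j:ℝ) + 1 := by ring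
        rw [e1]
        have h2 : (2:ℝ) * (j:ℝ) + 1 ≠ 0 := by positivity
        have h3 : ((j:ℝ)) + 1/2 ≠ 0 := by positivity
        field_simp
      rw [if_neg (by omega : ¬ k % 2 = 0), hGk, hGk2, hsum]
      simp only [zero_mul, zero_add]
      norm_num [Real.Gamma_one, Real.rpow_zero]
      have hR0' : (∏ j ∈ range m, ((j : ℝ) + 1/2)) ≠ 0 :=
        (Finset.prod_pos fun j _ => by positivity).ne'
      field_simp
      have hsq : Real.sqrt Real.pi * Real.sqrt Real.pi = Real.pi :=
        Real.mul_self_sqrt Real.pi_pos.le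
      set a := Real.sqrt Real.pi
      rw [show ∏ x ∈ range m, ((x:ℝ) * 2 + 1) / 2 = ∏ x ∈ range m, (2 * (x:ℝ) + 1) / 2 from
        Finset.prod_congr rfl fun x _ => by ring]
      ring
end
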